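/- Let n ≥ 1 be an integer, D > 0, set c := −(n+1)·(n·D)^{1/(n+1)} and ρ₀ := (n·D)^{1/(2n+2)}, and let a > ρ₀ be given. Then there exists a differentiable function ρ : ℝ → ℝ with ρ(0) = a such that for every t ∈ ℝ one has ρ(t) > ρ₀ and ρ'(t) = √(ρ(t)² + D·ρ(t)^{−2n} + c/n); in particular ρ'(t) > 0 for all t ∈ ℝ. -/

import Mathlib

open Real Set Filter MeasureTheory intervalIntegral Topology

noncomputable def kfun (s : ℝ) (n : ℕ) (u : ℝ) : ℝ :=
  ∑ j ∈ Finset.range n, u ^ j * ∑ i ∈ Finset.range (n - j), u ^ i * s ^ (n - 1 - j - i)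

lemma kfun_id (s : ℝ) (n : ℕ) (u : ℝ) :
    (n : ℝ) * u ^ (n+1) - ((n:ℝ)+1) * s * u ^ n + s ^ (n+1)
      = (u - s) ^ 2 * kfun s n u := by
  induction n with
  | zero => simp [kfun]
  | succ m ih =>
    have hk : kfun s (m+1) u
        = u * kfun s m u + ∑ i ∈ Finset.range (m+1), u ^ i * s ^ (m - i) := by
      rw [kfun, Finset.sum_range_succ']
      congr 1
      · rw [kfun, Finset.mul_sum]
        apply Finset.sum_congr rfl
        intro j hj
        have h1 : m + 1 - (j + 1) = m - j := by omega
        have h2 : ∀ i, m + 1 - 1 - (j + 1) - i = m - 1 - j - i := by omega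
        rw [h1]
        rw [show (∑ i ∈ Finset.range (m - j), u ^ i * s ^ (m + 1 - 1 - (j + 1) - i))
            = ∑ i ∈ Finset.range (m - j), u ^ i * s ^ (m - 1 - j - i) from
          Finset.sum_congr rfl (fun i _ => by rw [h2 i])]
        ring
      · simp
    rw [hk]
    push_cast
    have h3 : (∑ i ∈ Finset.range (m+1), u ^ i * s ^ (m - i)) * (u - s)
        = u^(m+1) - s^(m+1) := by
      have := geom_sum₂_mul u s (m+1)
      simpa using this
    linear_combination u * ih - (u - s) * h3

lemma kfun_pos {s u : ℝ} (hs : 0 < s) (hu : 0 < u) {n : ℕ} (hn : 1 ≤ n) :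
    0 < kfun s n u := by
  have key : ∀ j ∈ Finset.range n,
      0 ≤ u ^ j * ∑ i ∈ Finset.range (n - j), u ^ i * s ^ (n - 1 - j - i) := by
    intro j _
    have : 0 ≤ ∑ i ∈ Finset.range (n - j), u ^ i * s ^ (n - 1 - j - i) :=
      Finset.sum_nonneg fun i _ => by positivity
    positivity
  have h0 : 0 < u ^ 0 * ∑ i ∈ Finset.range (n - 0), u ^ i * s ^ (n - 1 - 0 - i) := by
    have : 0 < ∑ i ∈ Finset.range (n - 0), u ^ i * s ^ (n - 1 - 0 - i) := by
      apply Finset.sum_pos (fun i _ => by positivity)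
      simp [Finset.nonempty_range_iff]
      omega
    simpa using this
  calc (0:ℝ) < u ^ 0 * ∑ i ∈ Finset.range (n - 0), u ^ i * s ^ (n - 1 - 0 - i) := h0
    _ ≤ kfun s n u := Finset.single_le_sum key (by simp [Finset.mem_range]; omega)

lemma kfun_le {s u A : ℝ} (hs : 0 ≤ s) (hsu : s ≤ u) (huA : u ≤ A) (n : ℕ) :
    kfun s n u ≤ (n : ℝ) * ((n : ℝ) * A ^ (n - 1)) := by
  have hu : 0 ≤ u := hs.trans hsu
  have hA : 0 ≤ A := hu.trans huA
  have hterm : ∀ j ∈ Finset.range n,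
      u ^ j * ∑ i ∈ Finset.range (n - j), u ^ i * s ^ (n - 1 - j - i)
        ≤ (n : ℝ) * A ^ (n - 1) := by
    intro j hj
    rw [Finset.mem_range] at hj
    have inner : ∀ i ∈ Finset.range (n - j),
        u ^ j * (u ^ i * s ^ (n - 1 - j - i)) ≤ A ^ (n - 1) := by
      intro i hi
      rw [Finset.mem_range] at hi
      have h1 : u ^ j * (u ^ i * s ^ (n - 1 - j - i)) ≤ A ^ j * (A ^ i * A ^ (n - 1 - j - i)) := by
        have huA' : u ≤ A := huA
        have hsA : s ≤ A := hsu.trans huA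
        gcongr <;> first | assumption | positivity
      have h2 : A ^ j * (A ^ i * A ^ (n - 1 - j - i)) = A ^ (n - 1) := by
        rw [← pow_add, ← pow_add]
        congr 1
        omega
      linarith
    calc u ^ j * ∑ i ∈ Finset.range (n - j), u ^ i * s ^ (n - 1 - j - i)
        = ∑ i ∈ Finset.range (n - j), u ^ j * (u ^ i * s ^ (n - 1 - j - i)) := by
          rw [Finset.mul_sum]
      _ ≤ ∑ i ∈ Finset.range (n - j), A ^ (n - 1) := Finset.sum_le_sum inner
      _ = ((n - j : ℕ) : ℝ) * A ^ (n - 1) := by rw [Finset.sum_const]; simp [nsmul_eq_mul]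
      _ ≤ (n : ℝ) * A ^ (n - 1) := by
          have hc : ((n - j : ℕ) : ℝ) ≤ (n : ℝ) := by exact_mod_cast Nat.sub_le n j
          have hp : (0:ℝ) ≤ A ^ (n-1) := by positivity
          nlinarith
  calc kfun s n u ≤ ∑ _j ∈ Finset.range n, (n : ℝ) * A ^ (n - 1) := Finset.sum_le_sum hterm
    _ = (n : ℝ) * ((n : ℝ) * A ^ (n - 1)) := by
        rw [Finset.sum_const, nsmul_eq_mul, Finset.card_range]

lemma Fid (n : ℕ) (s D c x : ℝ) (hx : x ≠ 0) (hn0 : (n:ℝ) ≠ 0)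
    (hD : (n:ℝ) * D = s ^ (n+1)) (hc : c = -(((n:ℝ)+1) * s)) :
    x ^ 2 + D * x ^ (-(2 * n : ℤ)) + c / (n:ℝ)
      = (x^2 - s)^2 * kfun s n (x^2) / ((n:ℝ) * (x^2) ^ n) := by
  have hz : x ^ (-(2 * n : ℤ)) = ((x^2) ^ n)⁻¹ := by
    rw [show (-(2 * n : ℤ)) = -((2*n : ℕ) : ℤ) by push_cast; ring, zpow_neg, zpow_natCast,
      pow_mul]
  have hxn : (x^2) ^ n ≠ 0 := by positivity
  have hinv : ((x^2) ^ n)⁻¹ * (x^2) ^ n = 1 := inv_mul_cancel₀ hxn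
  have hninv : ((n:ℝ))⁻¹ * (n:ℝ) = 1 := inv_mul_cancel₀ hn0
  rw [eq_div_iff (by positivity : ((n:ℝ) * (x^2) ^ n) ≠ 0), hz, hc, div_eq_mul_inv]
  linear_combination (kfun_id s n (x^2)) + ((n:ℝ)*D) * hinv + hD
    - (((n:ℝ)+1)*s*(x^2)^n) * hninv

set_option maxHeartbeats 1500000 in
/-- For `D > 0`, `c = -(n+1)(n D)^{1/(n+1)}` and `ρ₀ = (n D)^{1/(2n+2)}`, given
any `a > ρ₀`, the ODE `ρ' = √(ρ² + D ρ^{-2n} + c/n)` admits a solution defined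
on all of `ℝ` with `ρ(0) = a`, `ρ > ρ₀` and `ρ' > 0` everywhere. -/
theorem stmt_16 (n : ℕ) (hn : 1 ≤ n) (D : ℝ) (hD : 0 < D)
    (c : ℝ) (hc : c = -(((n : ℝ) + 1) * ((n : ℝ) * D) ^ ((1 : ℝ) / ((n : ℝ) + 1))))
    (ρ₀ : ℝ) (hρ₀ : ρ₀ = ((n : ℝ) * D) ^ ((1 : ℝ) / (2 * (n : ℝ) + 2)))
    (a : ℝ) (ha : ρ₀ < a) :
    ∃ ρ : ℝ → ℝ, ρ 0 = a ∧ ∀ t : ℝ, ρ₀ < ρ t ∧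
      HasDerivAt ρ (Real.sqrt ((ρ t) ^ 2 + D * (ρ t) ^ (-(2 * n : ℤ)) + c / (n : ℝ))) t ∧
      0 < Real.sqrt ((ρ t) ^ 2 + D * (ρ t) ^ (-(2 * n : ℤ)) + c / (n : ℝ)) := by
  have hn0 : (0:ℝ) < (n:ℝ) := by exact_mod_cast hn
  have hnD : (0:ℝ) < (n:ℝ) * D := by positivity
  have hρ₀pos : 0 < ρ₀ := by rw [hρ₀]; exact Real.rpow_pos_of_pos hnD _
  set s : ℝ := ρ₀ ^ 2 with hs_def
  have hs : 0 < s := by positivity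
  have hapos : 0 < a := hρ₀pos.trans ha
  have hs_eq : s = ((n:ℝ) * D) ^ ((1:ℝ) / ((n:ℝ) + 1)) := by
    rw [hs_def, hρ₀, ← Real.rpow_natCast (((n:ℝ)*D) ^ ((1:ℝ)/(2*(n:ℝ)+2))) 2,
      ← Real.rpow_mul hnD.le]
    congr 1
    have h2 : 2*(n:ℝ)+2 ≠ 0 := by positivity
    have h3 : (n:ℝ)+1 ≠ 0 := by positivity
    push_cast
    field_simp
  have hsnD : (n:ℝ) * D = s ^ (n+1) := by
    rw [hs_eq, ← Real.rpow_natCast (((n:ℝ)*D) ^ ((1:ℝ)/((n:ℝ)+1))) (n+1),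
      ← Real.rpow_mul hnD.le]
    rw [show (1:ℝ)/((n:ℝ)+1) * ((n+1:ℕ):ℝ) = 1 by
      have h3 : (n:ℝ)+1 ≠ 0 := by positivity
      push_cast; field_simp]
    rw [Real.rpow_one]
  have hc' : c = -(((n:ℝ)+1) * s) := by rw [hc, hs_eq]
  set F : ℝ → ℝ := fun x => x ^ 2 + D * x ^ (-(2 * n : ℤ)) + c / (n:ℝ) with hF_def
  have hFid : ∀ x : ℝ, x ≠ 0 →
      F x = (x^2 - s)^2 * kfun s n (x^2) / ((n:ℝ) * (x^2) ^ n) :=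
    fun x hx => Fid n s D c x hx hn0.ne' hsnD hc'
  have hx2gt : ∀ x : ℝ, ρ₀ < x → s < x ^ 2 := by
    intro x hx
    exact pow_lt_pow_left₀ hx hρ₀pos.le (by norm_num)
  have hFpos : ∀ x : ℝ, ρ₀ < x → 0 < F x := by
    intro x hx
    have hx0 : 0 < x := hρ₀pos.trans hx
    rw [hFid x hx0.ne']
    have h1 : 0 < (x^2 - s)^2 := by nlinarith [hx2gt x hx]
    have h2 : 0 < kfun s n (x^2) := kfun_pos hs (by positivity) hn
    have h3 : 0 < (n:ℝ) * (x^2)^n := by positivity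
    positivity
  have hFcont : ContinuousOn F (Ioi ρ₀) := by
    intro x hx
    have hx0 : x ≠ 0 := (hρ₀pos.trans hx).ne'
    apply ContinuousAt.continuousWithinAt
    exact ((continuousAt_pow x 2).add
      (continuousAt_const.mul (continuousAt_zpow₀ x _ (Or.inl hx0)))).add continuousAt_const
  set g : ℝ → ℝ := fun x => (Real.sqrt (F x))⁻¹ with hg_def
  have hsqpos : ∀ x : ℝ, ρ₀ < x → 0 < Real.sqrt (F x) :=
    fun x hx => Real.sqrt_pos.2 (hFpos x hx)
  have hgpos : ∀ x : ℝ, ρ₀ < x → 0 < g x := fun x hx => inv_pos.2 (hsqpos x hx)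
  have hgcont : ContinuousOn g (Ioi ρ₀) :=
    (Real.continuous_sqrt.comp_continuousOn hFcont).inv₀
      fun x hx => (hsqpos x hx).ne'
  have hInt : ∀ x y : ℝ, ρ₀ < x → ρ₀ < y → IntervalIntegrable g volume x y :=
    fun x y hx hy =>
      (hgcont.mono ((Set.ordConnected_Ioi).uIcc_subset hx hy)).intervalIntegrable
  set G : ℝ → ℝ := fun x => ∫ u in a..x, g u with hG_def
  have hGd : ∀ x ∈ Ioi ρ₀, HasDerivAt G (g x) x := by
    intro x hx
    exact intervalIntegral.integral_hasDerivAt_right (hInt a x ha hx)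
      (hgcont.stronglyMeasurableAtFilter isOpen_Ioi x hx)
      (hgcont.continuousAt (isOpen_Ioi.mem_nhds hx))
  have hGcont : ContinuousOn G (Ioi ρ₀) :=
    fun x hx => (hGd x hx).continuousAt.continuousWithinAt
  have hGmono : StrictMonoOn G (Ioi ρ₀) := by
    apply strictMonoOn_of_deriv_pos (convex_Ioi ρ₀) hGcont
    intro x hx
    rw [interior_Ioi] at hx
    rw [(hGd x hx).deriv]
    exact hgpos x hx
  -- behaviour at +∞
  set C : ℝ := Real.sqrt (D * a ^ (-(2 * n : ℤ))) with hC_def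
  have hC : 0 ≤ C := Real.sqrt_nonneg _
  have hzp : ∀ x : ℝ, x ^ (-(2 * n : ℤ)) = ((x^2) ^ n)⁻¹ := by
    intro x
    rw [show (-(2 * n : ℤ)) = -((2*n : ℕ) : ℤ) by push_cast; ring, zpow_neg, zpow_natCast,
      pow_mul]
  have hC2 : C^2 = D * a ^ (-(2 * n : ℤ)) := by
    rw [hC_def, Real.sq_sqrt]
    rw [hzp]
    positivity
  have hgl : ∀ u : ℝ, a ≤ u → (u + C)⁻¹ ≤ g u := by
    intro u hu
    have hu0 : 0 < u := hapos.trans_le hu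
    have huρ : ρ₀ < u := ha.trans_le hu
    have hFle : F u ≤ (u + C)^2 := by
      have h1 : D * u ^ (-(2 * n : ℤ)) ≤ D * a ^ (-(2 * n : ℤ)) := by
        rw [hzp u, hzp a]
        have : (a^2)^n ≤ (u^2)^n := by
          apply pow_le_pow_left₀ (by positivity)
          nlinarith
        have ha2 : (0:ℝ) < (a^2)^n := by positivity
        have := inv_anti₀ ha2 this
        nlinarith [hD.le, mul_le_mul_of_nonneg_left this hD.le]
      have h2 : c / (n:ℝ) ≤ 0 := by
        rw [hc']
        apply div_nonpos_of_nonpos_of_nonneg _ hn0.le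
        nlinarith
      have : F u ≤ u^2 + C^2 := by
        simp only [hF_def]
        rw [hC2]
        linarith
      nlinarith
    have hsq : Real.sqrt (F u) ≤ u + C := by
      calc Real.sqrt (F u) ≤ Real.sqrt ((u+C)^2) := Real.sqrt_le_sqrt hFle
        _ = u + C := Real.sqrt_sq (by positivity)
    exact inv_anti₀ (hsqpos u huρ) hsq
  have hlogint : ∀ x : ℝ, a ≤ x →
      Real.log (x + C) - Real.log (a + C) ≤ G x := by
    intro x hx
    have hax : a ≤ x := hx
    have hder : ∀ u ∈ Set.uIcc a x, HasDerivAt (fun v => Real.log (v + C)) (u + C)⁻¹ u := by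
      intro u hu
      rw [Set.uIcc_of_le hax] at hu
      have hu0 : 0 < u + C := by have h1 := hu.1; linarith
      have := ((hasDerivAt_id u).add_const C).log hu0.ne'
      simpa using this
    have hcontint : ContinuousOn (fun u : ℝ => (u + C)⁻¹) (Set.uIcc a x) := by
      apply ContinuousOn.inv₀ (Continuous.continuousOn (continuous_id.add continuous_const))
      intro u hu
      rw [Set.uIcc_of_le hax] at hu
      have h1 := hu.1
      intro h
      simp only [Pi.add_apply, id_eq] at h
      nlinarith
    have heq : ∫ u in a..x, (u + C)⁻¹ = Real.log (x + C) - Real.log (a + C) :=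
      intervalIntegral.integral_eq_sub_of_hasDerivAt hder hcontint.intervalIntegrable
    rw [← heq]
    apply intervalIntegral.integral_mono_on hax hcontint.intervalIntegrable
      (hInt a x ha (ha.trans_le hax))
    intro u hu
    exact hgl u hu.1
  have hGtop : Tendsto G atTop atTop := by
    apply tendsto_atTop_mono' atTop
      ((eventually_ge_atTop a).mono fun x hx => hlogint x hx)
    have h1 : Tendsto (fun x : ℝ => Real.log (x + C)) atTop atTop :=
      Real.tendsto_log_atTop.comp (tendsto_atTop_add_const_right atTop C tendsto_id)
    simpa [sub_eq_add_neg] using tendsto_atTop_add_const_right atTop (-Real.log (a + C)) h1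
  -- behaviour at ρ₀⁺
  set M : ℝ := (2*a)^2 * ((n:ℝ) * ((n:ℝ) * (a^2) ^ (n-1))) / ((n:ℝ) * s ^ n) with hM_def
  have hM : 0 < M := by
    apply div_pos
    · positivity
    · positivity
  have hFleM : ∀ u : ℝ, ρ₀ < u → u ≤ a → F u ≤ M * (u - ρ₀)^2 := by
    intro u hu hua
    have hu0 : 0 < u := hρ₀pos.trans hu
    rw [hFid u hu0.ne']
    have hsu2 : s ≤ u^2 := (hx2gt u hu).le
    have hu2a : u^2 ≤ a^2 := by nlinarith
    have h1 : (u^2 - s)^2 ≤ (u - ρ₀)^2 * (2*a)^2 := by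
      have : u^2 - s = (u - ρ₀) * (u + ρ₀) := by rw [hs_def]; ring
      rw [this, mul_pow]
      have h01 : 0 ≤ u - ρ₀ := by linarith
      have h02 : 0 ≤ u + ρ₀ := by linarith
      have h03 : u + ρ₀ ≤ 2*a := by linarith
      have := pow_le_pow_left₀ h02 h03 2
      nlinarith [sq_nonneg (u - ρ₀)]
    have h2 : kfun s n (u^2) ≤ (n:ℝ) * ((n:ℝ) * (a^2) ^ (n-1)) :=
      kfun_le hs.le hsu2 hu2a n
    have h3 : (n:ℝ) * s^n ≤ (n:ℝ) * (u^2)^n := by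
      have : s^n ≤ (u^2)^n := pow_le_pow_left₀ hs.le hsu2 n
      nlinarith
    have h4 : 0 ≤ kfun s n (u^2) := (kfun_pos hs (by positivity) hn).le
    calc (u^2 - s)^2 * kfun s n (u^2) / ((n:ℝ) * (u^2)^n)
        ≤ ((u - ρ₀)^2 * (2*a)^2 * ((n:ℝ) * ((n:ℝ) * (a^2) ^ (n-1)))) / ((n:ℝ) * s^n) := by
          apply div_le_div₀ (by positivity) _ (by positivity) h3
          apply mul_le_mul h1 h2 h4 (by positivity)
      _ = M * (u - ρ₀)^2 := by rw [hM_def]; ring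
  have hglM : ∀ u : ℝ, ρ₀ < u → u ≤ a →
      (Real.sqrt M * (u - ρ₀))⁻¹ ≤ g u := by
    intro u hu hua
    have hsq : Real.sqrt (F u) ≤ Real.sqrt M * (u - ρ₀) := by
      calc Real.sqrt (F u) ≤ Real.sqrt (M * (u - ρ₀)^2) := Real.sqrt_le_sqrt (hFleM u hu hua)
        _ = Real.sqrt M * (u - ρ₀) := by
            rw [Real.sqrt_mul hM.le, Real.sqrt_sq (by linarith : (0:ℝ) ≤ u - ρ₀)]
    exact inv_anti₀ (hsqpos u hu) hsq
  have hGleM : ∀ x : ℝ, ρ₀ < x → x < a →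
      G x ≤ (Real.sqrt M)⁻¹ * (Real.log (x - ρ₀) - Real.log (a - ρ₀)) := by
    intro x hx hxa
    have hsM : 0 < Real.sqrt M := Real.sqrt_pos.2 hM
    have hxa' : x ≤ a := hxa.le
    have hder : ∀ u ∈ Set.uIcc x a,
        HasDerivAt (fun v => (Real.sqrt M)⁻¹ * Real.log (v - ρ₀))
          (Real.sqrt M * (u - ρ₀))⁻¹ u := by
      intro u hu
      rw [Set.uIcc_of_le hxa'] at hu
      have hu0 : 0 < u - ρ₀ := by have := hu.1; linarith
      have h := (((hasDerivAt_id u).sub_const ρ₀).log hu0.ne').const_mul (Real.sqrt M)⁻¹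
      have h2 : (Real.sqrt M * (u - ρ₀))⁻¹ = (Real.sqrt M)⁻¹ * (1 / (u - ρ₀)) := by
        rw [mul_inv]; ring
      rw [h2]
      exact h
    have hcontint : ContinuousOn (fun u : ℝ => (Real.sqrt M * (u - ρ₀))⁻¹) (Set.uIcc x a) := by
      apply ContinuousOn.inv₀
        (Continuous.continuousOn (continuous_const.mul (continuous_id.sub continuous_const)))
      intro u hu
      rw [Set.uIcc_of_le hxa'] at hu
      have h1 : 0 < u - ρ₀ := by have := hu.1; linarith
      have h2 : 0 < Real.sqrt M := Real.sqrt_pos.2 hM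
      intro h
      simp only [Pi.mul_apply, Pi.sub_apply, id_eq] at h
      nlinarith [mul_pos h2 h1]
    have heq : ∫ u in x..a, (Real.sqrt M * (u - ρ₀))⁻¹
        = (Real.sqrt M)⁻¹ * Real.log (a - ρ₀) - (Real.sqrt M)⁻¹ * Real.log (x - ρ₀) :=
      intervalIntegral.integral_eq_sub_of_hasDerivAt hder hcontint.intervalIntegrable
    have hmono : ∫ u in x..a, (Real.sqrt M * (u - ρ₀))⁻¹ ≤ ∫ u in x..a, g u := by
      apply intervalIntegral.integral_mono_on hxa' hcontint.intervalIntegrable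
        (hInt x a hx ha)
      intro u hu
      exact hglM u (lt_of_lt_of_le hx hu.1) hu.2
    have hsymm : G x = -∫ u in x..a, g u := by
      rw [hG_def]
      exact intervalIntegral.integral_symm x a
    rw [hsymm]
    rw [heq] at hmono
    linarith
  have hGbot : Tendsto G (𝓝[>] ρ₀) atBot := by
    refine tendsto_atBot_mono' (𝓝[>] ρ₀)
      (?_ : G ≤ᶠ[𝓝[>] ρ₀] fun x => (Real.sqrt M)⁻¹ * (Real.log (x - ρ₀) - Real.log (a - ρ₀))) ?_
    · filter_upwards [Ioo_mem_nhdsGT_of_mem (⟨le_refl ρ₀, ha⟩ : ρ₀ ∈ Ico ρ₀ a)] with x hx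
      exact hGleM x hx.1 hx.2
    · have hsub : Tendsto (fun x : ℝ => x - ρ₀) (𝓝[>] ρ₀) (𝓝[>] (0:ℝ)) := by
        apply tendsto_nhdsWithin_of_tendsto_nhds_of_eventually_within
        · have : Tendsto (fun x : ℝ => x - ρ₀) (𝓝 ρ₀) (𝓝 (ρ₀ - ρ₀)) :=
            (continuous_id.sub continuous_const).tendsto ρ₀
          rw [sub_self] at this
          exact this.mono_left nhdsWithin_le_nhds
        · filter_upwards [self_mem_nhdsWithin] with x hx
          exact sub_pos.2 (Set.mem_Ioi.mp hx)
      have hlog : Tendsto (fun x : ℝ => Real.log (x - ρ₀)) (𝓝[>] ρ₀) atBot :=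
        Real.tendsto_log_nhdsGT_zero.comp hsub
      have h1 : Tendsto (fun x : ℝ => Real.log (x - ρ₀) - Real.log (a - ρ₀)) (𝓝[>] ρ₀) atBot := by
        simpa [sub_eq_add_neg] using
          tendsto_atBot_add_const_right (𝓝[>] ρ₀) (-Real.log (a - ρ₀)) hlog
      exact Tendsto.const_mul_atBot (inv_pos.2 (Real.sqrt_pos.2 hM)) h1
  -- surjectivity
  have hGsurj : ∀ t : ℝ, ∃ x ∈ Ioi ρ₀, G x = t := by
    intro t
    have hev : ∀ᶠ x in 𝓝[>] ρ₀, G x ≤ t ∧ x ∈ Ioi ρ₀ :=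
      (hGbot.eventually (eventually_le_atBot t)).and self_mem_nhdsWithin
    obtain ⟨x₁, hx₁t, hx₁m⟩ := hev.exists
    have hev2 : ∀ᶠ x in atTop, t ≤ G x ∧ x₁ ≤ x :=
      (hGtop.eventually (eventually_ge_atTop t)).and (eventually_ge_atTop x₁)
    obtain ⟨x₂, hx₂t, hx₁₂⟩ := hev2.exists
    have hsub : Icc x₁ x₂ ⊆ Ioi ρ₀ := fun z hz => lt_of_lt_of_le hx₁m hz.1
    have hcont : ContinuousOn G (Icc x₁ x₂) := hGcont.mono hsub
    obtain ⟨x, hxm, hxG⟩ := intermediate_value_Icc hx₁₂ hcont ⟨hx₁t, hx₂t⟩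
    exact ⟨x, hsub hxm, hxG⟩
  choose ρ hρmem hρG using hGsurj
  have hGa : G a = 0 := intervalIntegral.integral_same
  have hρ0 : ρ 0 = a := by
    apply hGmono.injOn (hρmem 0) (Set.mem_Ioi.2 ha)
    rw [hρG 0, hGa]
  refine ⟨ρ, hρ0, fun t => ?_⟩
  have hmem := hρmem t
  refine ⟨hmem, ?_, Real.sqrt_pos.2 (hFpos _ hmem)⟩
  have hρmono : StrictMono ρ := by
    intro t₁ t₂ h
    apply (hGmono.lt_iff_lt (hρmem t₁) (hρmem t₂)).mp
    rw [hρG t₁, hρG t₂]; exact h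
  have hrange : ρ '' Set.univ ∈ 𝓝 (ρ t) := by
    apply Filter.mem_of_superset (isOpen_Ioi.mem_nhds (hρmem t))
    intro x hx
    exact ⟨G x, Set.mem_univ _, hGmono.injOn (hρmem (G x)) hx (hρG (G x))⟩
  have hρcont : ContinuousAt ρ t :=
    (hρmono.strictMonoOn Set.univ).continuousAt_of_image_mem_nhds Filter.univ_mem hrange
  have hd : HasDerivAt ρ ((g (ρ t))⁻¹) t :=
    HasDerivAt.of_local_left_inverse hρcont (hGd (ρ t) hmem) (hgpos _ hmem).ne'
      (Filter.Eventually.of_forall hρG)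
  have hgi : (g (ρ t))⁻¹ = Real.sqrt (F (ρ t)) := inv_inv _
  rw [hgi] at hd
  exact hd
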